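/- Let σ ∈ S_n with σ ≠ id, l = min{i : σ(i) > σ(i+1)}, and σ̂ = σ̂(y₁,y₂,y₃) as above with y₁, y₂, y₃ nonzero. Let I = [1,n+1] \ {l, n+1}. Then det(σ̂|_{I, [1,n+1]\{σ(l), n+1\}}) has absolute value 1, det(σ̂|_{I, [1,n+1]\{σ(l+1), n+1\}}) has absolute value |y₃|, and for all other pairs {j₁, j₂}, det(σ̂|_{I, [1,n+1]\{j₁, j₂\}}) = 0. -/

import Mathlib

lemma aux_det_permlike {m : Type*} [Fintype m] [DecidableEq m] (M : Matrix m m ℝ)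
    (p : m → m) (hp : Function.Injective p) (d : m → ℝ)
    (hM : ∀ a b, M a b = if b = p a then d a else 0) :
    |M.det| = ∏ a, |d a| := by
  have hb : Function.Bijective p := Finite.injective_iff_bijective.mp hp
  let e : Equiv.Perm m := Equiv.ofBijective p hb
  have hMeq : M = Matrix.diagonal d * e.permMatrix ℝ := by
    ext a b
    rw [Matrix.diagonal_mul, hM]
    simp [Equiv.Perm.permMatrix, PEquiv.toMatrix, Equiv.toPEquiv, e, Equiv.ofBijective,
      Option.mem_def, mul_ite, eq_comm]
  rw [hMeq, Matrix.det_mul, Matrix.det_diagonal, Matrix.det_permutation]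
  rw [abs_mul, Finset.abs_prod]
  rcases Int.units_eq_one_or (Equiv.Perm.sign e) with h | h <;> simp [h]

/-- The matrix `σ̂(y₁,y₂,y₃)`. -/
def shat {n : ℕ} (σ : Equiv.Perm (Fin n)) (l : Fin n) (hl : l.val + 1 < n)
    (y₁ y₂ y₃ : ℝ) : Matrix (Fin (n + 1)) (Fin (n + 1)) ℝ :=
  (Matrix.of fun i j : Fin (n + 1) =>
    if h : i.val < n ∧ j.val < n then
      (if (σ ⟨i.val, h.1⟩).val = j.val then (1 : ℝ) else 0)
    else 0)
  + Matrix.single l.castSucc (Fin.last n) y₁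
  + Matrix.single (Fin.last n) (σ l).castSucc y₂
  + Matrix.single (Fin.last n) (Fin.last n) (y₁ * y₂)
  + Matrix.single (Fin.castSucc ⟨l.val + 1, hl⟩) (σ l).castSucc y₃

lemma shat_row {n : ℕ} (σ : Equiv.Perm (Fin n)) (l : Fin n) (hl : l.val + 1 < n)
    (y₁ y₂ y₃ : ℝ) (k : Fin n) (hk : k ≠ l) (j : Fin (n + 1)) :
    shat σ l hl y₁ y₂ y₃ k.castSucc j =
      (if j = (σ k).castSucc then 1 else 0) +
      (if k = ⟨l.val + 1, hl⟩ ∧ j = (σ l).castSucc then y₃ else 0) := by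
  have hkl : k.val < n := k.isLt
  have hklast : (Fin.last n : Fin (n+1)) ≠ k.castSucc := (Fin.castSucc_lt_last k).ne'
  have hkcl : (l.castSucc : Fin (n+1)) ≠ k.castSucc := by
    simp [Fin.castSucc_inj, eq_comm]; exact fun h => hk h.symm
  have hlp : (Fin.castSucc (⟨l.val + 1, hl⟩ : Fin n) : Fin (n+1)) = k.castSucc
      ↔ k = ⟨l.val + 1, hl⟩ := by
    rw [Fin.castSucc_inj]; exact eq_comm
  simp only [shat, Matrix.add_apply, Matrix.of_apply, Matrix.single,
    hklast, hkcl, false_and, if_false, hlp]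
  have hfirst : (if h : (k.castSucc : Fin (n+1)).val < n ∧ j.val < n then
      (if (σ ⟨(k.castSucc : Fin (n+1)).val, h.1⟩).val = j.val then (1:ℝ) else 0) else 0)
      = if j = (σ k).castSucc then 1 else 0 := by
    rcases lt_or_ge j.val n with hj | hj
    · rw [dif_pos ⟨by simpa using hkl, hj⟩]
      have : (⟨(k.castSucc : Fin (n+1)).val, by simpa using hkl⟩ : Fin n) = k := by
        ext; simp
      rw [this]
      congr 1
      simp [Fin.ext_iff, eq_comm]
    · rw [dif_neg (by omega)]
      have : j ≠ (σ k).castSucc := by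
        intro h; rw [h] at hj; simp at hj; omega
      rw [if_neg this]
  rw [hfirst]
  have h2 : (if k = (⟨l.val+1,hl⟩ : Fin n) ∧ (σ l).castSucc = j then y₃ else 0)
      = (if k = (⟨l.val+1,hl⟩ : Fin n) ∧ j = (σ l).castSucc then y₃ else 0) := by
    exact if_congr (and_congr Iff.rfl eq_comm) rfl rfl
  rw [h2]
  ring

/-- deleting rows `{l, n+1}` from `σ̂(y₁,y₂,y₃)` and columns `{j₁,j₂}`,
the resulting `(n-1) × (n-1)` minor has absolute value `1` if `{j₁,j₂} = {σ(l), n+1}`,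
absolute value `|y₃|` if `{j₁,j₂} = {σ(l+1), n+1}`, and vanishes otherwise. The minor
is represented via injective enumerations of the remaining rows and columns. -/
theorem minor_values_rows_l_last {n : ℕ} (σ : Equiv.Perm (Fin n)) (hσ : σ ≠ 1)
    (l : Fin n) (hl : l.val + 1 < n)
    (hdesc : σ ⟨l.val + 1, hl⟩ < σ l)
    (hmin : ∀ (i : Fin n) (h : i.val + 1 < n), i < l → σ i < σ ⟨i.val + 1, h⟩)
    (y₁ y₂ y₃ : ℝ) (hy₁ : y₁ ≠ 0) (hy₂ : y₂ ≠ 0) (hy₃ : y₃ ≠ 0)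
    (r : Fin (n - 1) → Fin (n + 1)) (hr : Function.Injective r)
    (hravoid : ∀ a, r a ≠ l.castSucc ∧ r a ≠ Fin.last n)
    (j₁ j₂ : Fin (n + 1)) (hj : j₁ ≠ j₂)
    (c : Fin (n - 1) → Fin (n + 1)) (hc : Function.Injective c)
    (hcavoid : ∀ a, c a ≠ j₁ ∧ c a ≠ j₂) :
    (({j₁, j₂} : Finset (Fin (n + 1))) = {(σ l).castSucc, Fin.last n} →
        |((shat σ l hl y₁ y₂ y₃).submatrix r c).det| = 1) ∧
    (({j₁, j₂} : Finset (Fin (n + 1))) = {(σ ⟨l.val + 1, hl⟩).castSucc, Fin.last n} →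
        |((shat σ l hl y₁ y₂ y₃).submatrix r c).det| = |y₃|) ∧
    (({j₁, j₂} : Finset (Fin (n + 1))) ≠ {(σ l).castSucc, Fin.last n} →
      ({j₁, j₂} : Finset (Fin (n + 1))) ≠ {(σ ⟨l.val + 1, hl⟩).castSucc, Fin.last n} →
        ((shat σ l hl y₁ y₂ y₃).submatrix r c).det = 0) := by
  classical
  have hn2 : 2 ≤ n := by omega
  -- Surjectivity of `c` onto the complement of `{j₁, j₂}`.
  have hcsurj : ∀ j : Fin (n+1), j ≠ j₁ → j ≠ j₂ → ∃ b, c b = j := by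
    intro j h1 h2
    by_contra h
    push_neg at h
    have hsub : insert j (Finset.univ.image c) ⊆ Finset.univ \ {j₁, j₂} := by
      intro x hx
      rcases Finset.mem_insert.mp hx with rfl | hx
      · simp [h1, h2]
      · obtain ⟨a, _, rfl⟩ := Finset.mem_image.mp hx
        simp [(hcavoid a).1, (hcavoid a).2]
    have hcard1 : (insert j (Finset.univ.image c)).card = n := by
      rw [Finset.card_insert_of_notMem (by
        simp only [Finset.mem_image, not_exists]
        exact fun a => fun ⟨_, hh⟩ => h a hh),
        Finset.card_image_of_injective _ hc]
      simp
      omega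
    have hcard2 : (Finset.univ \ ({j₁, j₂} : Finset (Fin (n+1)))).card = n - 1 := by
      rw [Finset.card_sdiff_of_subset (Finset.subset_univ _), Finset.card_pair hj]
      simp
    have := Finset.card_le_card hsub
    omega
  -- Surjectivity of `r` onto the complement of `{l, last}`.
  have hrsurj : ∀ i : Fin (n+1), i ≠ l.castSucc → i ≠ Fin.last n → ∃ a, r a = i := by
    intro i h1 h2
    by_contra h
    push_neg at h
    have hsub : insert i (Finset.univ.image r) ⊆ Finset.univ \ {l.castSucc, Fin.last n} := by
      intro x hx
      rcases Finset.mem_insert.mp hx with rfl | hx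
      · simp [h1, h2]
      · obtain ⟨a, _, rfl⟩ := Finset.mem_image.mp hx
        simp [(hravoid a).1, (hravoid a).2]
    have hcard1 : (insert i (Finset.univ.image r)).card = n := by
      rw [Finset.card_insert_of_notMem (by
        simp only [Finset.mem_image, not_exists]
        exact fun a => fun ⟨_, hh⟩ => h a hh),
        Finset.card_image_of_injective _ hr]
      simp
      omega
    have hcard2 : (Finset.univ \ ({l.castSucc, Fin.last n} : Finset (Fin (n+1)))).card
        = n - 1 := by
      rw [Finset.card_sdiff_of_subset (Finset.subset_univ _),
        Finset.card_pair (Fin.castSucc_lt_last l).ne]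
      simp
    have := Finset.card_le_card hsub
    omega
  -- Each row index corresponds to some `k a : Fin n`, `k a ≠ l`.
  have hk0 : ∀ a, ∃ k : Fin n, r a = k.castSucc ∧ k ≠ l := by
    intro a
    obtain ⟨hne_l, hne_last⟩ := hravoid a
    obtain ⟨k, hk⟩ := Fin.exists_castSucc_eq.mpr hne_last
    exact ⟨k, hk.symm, fun h => hne_l (by rw [hk.symm, h])⟩
  choose k hkr hknl using hk0
  have hkinj : Function.Injective k := by
    intro a a' h
    apply hr
    rw [hkr, hkr, h]
  have hentry : ∀ a b, (shat σ l hl y₁ y₂ y₃).submatrix r c a b =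
      (if c b = (σ (k a)).castSucc then 1 else 0) +
      (if k a = ⟨l.val + 1, hl⟩ ∧ c b = (σ l).castSucc then y₃ else 0) := by
    intro a b
    rw [Matrix.submatrix_apply, hkr a]
    exact shat_row σ l hl y₁ y₂ y₃ (k a) (hknl a) (c b)
  refine ⟨?_, ?_, ?_⟩
  · -- Case {j₁, j₂} = {σ l, last}
    intro hset
    have hj1 : j₁ = (σ l).castSucc ∨ j₁ = Fin.last n := by
      have : j₁ ∈ ({(σ l).castSucc, Fin.last n} : Finset (Fin (n+1))) := by
        rw [← hset]; simp
      simpa using this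
    have hj2 : j₂ = (σ l).castSucc ∨ j₂ = Fin.last n := by
      have : j₂ ∈ ({(σ l).castSucc, Fin.last n} : Finset (Fin (n+1))) := by
        rw [← hset]; simp
      simpa using this
    have hcne : ∀ b, c b ≠ (σ l).castSucc := by
      intro b hb
      rcases hj1 with h | h
      · exact (hcavoid b).1 (hb.trans h.symm)
      · rcases hj2 with h2 | h2
        · exact (hcavoid b).2 (hb.trans h2.symm)
        · exact hj (h.trans h2.symm)
    have hne : ∀ a, (σ (k a)).castSucc ≠ j₁ ∧ (σ (k a)).castSucc ≠ j₂ := by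
      intro a
      have h1 : ((σ (k a)).castSucc : Fin (n+1)) ≠ (σ l).castSucc := by
        rw [Ne, Fin.castSucc_inj]
        exact fun h => hknl a (σ.injective h)
      have h2 : ((σ (k a)).castSucc : Fin (n+1)) ≠ Fin.last n :=
        (Fin.castSucc_lt_last _).ne
      constructor
      · rcases hj1 with h | h <;> rw [h] <;> assumption
      · rcases hj2 with h | h <;> rw [h] <;> assumption
    choose p hp using fun a => hcsurj _ (hne a).1 (hne a).2
    have hpinj : Function.Injective p := by
      intro a a' h
      have hcc : c (p a) = c (p a') := by rw [h]
      rw [hp, hp] at hcc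
      exact hkinj (σ.injective (Fin.castSucc_inj.mp hcc))
    have habs := aux_det_permlike ((shat σ l hl y₁ y₂ y₃).submatrix r c) p hpinj
      (fun _ => 1) (by
        intro a b
        rw [hentry]
        have hneg : ¬ (k a = (⟨l.val + 1, hl⟩ : Fin n) ∧ c b = (σ l).castSucc) :=
          fun h => hcne b h.2
        have hiff : (c b = (σ (k a)).castSucc) ↔ b = p a := by
          rw [← hp a, hc.eq_iff]
        rw [if_neg hneg, add_zero, if_congr hiff rfl rfl])
    simpa using habs
  · -- Case {j₁, j₂} = {σ (l+1), last}
    intro hset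
    set L1 : Fin n := ⟨l.val + 1, hl⟩ with hL1
    have hL1ne : L1 ≠ l := by
      intro h
      have := congrArg Fin.val h
      simp [hL1] at this
    have hj1 : j₁ = (σ L1).castSucc ∨ j₁ = Fin.last n := by
      have : j₁ ∈ ({(σ L1).castSucc, Fin.last n} : Finset (Fin (n+1))) := by
        rw [← hset]; simp
      simpa using this
    have hj2 : j₂ = (σ L1).castSucc ∨ j₂ = Fin.last n := by
      have : j₂ ∈ ({(σ L1).castSucc, Fin.last n} : Finset (Fin (n+1))) := by
        rw [← hset]; simp
      simpa using this
    have hcne : ∀ b, c b ≠ (σ L1).castSucc := by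
      intro b hb
      rcases hj1 with h | h
      · exact (hcavoid b).1 (hb.trans h.symm)
      · rcases hj2 with h2 | h2
        · exact (hcavoid b).2 (hb.trans h2.symm)
        · exact hj (h.trans h2.symm)
    -- the modified column-target map
    set k' : Fin (n-1) → Fin n := fun a => if k a = L1 then l else k a with hk'
    have hk'neL1 : ∀ a, k' a ≠ L1 := by
      intro a
      simp only [hk']
      split_ifs with h
      · exact fun hh => hL1ne hh.symm
      · exact h
    have hk'inj : Function.Injective k' := by
      intro a a' h
      apply hkinj
      simp only [hk'] at h
      split_ifs at h with h1 h2 h2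
      · rw [h1, h2]
      · exact absurd h.symm (hknl a')
      · exact absurd h (hknl a)
      · exact h
    have hne : ∀ a, (σ (k' a)).castSucc ≠ j₁ ∧ (σ (k' a)).castSucc ≠ j₂ := by
      intro a
      have h1 : ((σ (k' a)).castSucc : Fin (n+1)) ≠ (σ L1).castSucc := by
        rw [Ne, Fin.castSucc_inj]
        exact fun h => hk'neL1 a (σ.injective h)
      have h2 : ((σ (k' a)).castSucc : Fin (n+1)) ≠ Fin.last n :=
        (Fin.castSucc_lt_last _).ne
      constructor
      · rcases hj1 with h | h <;> rw [h] <;> assumption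
      · rcases hj2 with h | h <;> rw [h] <;> assumption
    choose p hp using fun a => hcsurj _ (hne a).1 (hne a).2
    have hpinj : Function.Injective p := by
      intro a a' h
      have hcc : c (p a) = c (p a') := by rw [h]
      rw [hp, hp] at hcc
      exact hk'inj (σ.injective (Fin.castSucc_inj.mp hcc))
    set d : Fin (n-1) → ℝ := fun a => if k a = L1 then y₃ else 1 with hd
    have habs := aux_det_permlike ((shat σ l hl y₁ y₂ y₃).submatrix r c) p hpinj
      d (by
        intro a b
        rw [hentry]
        by_cases hka : k a = L1
        · have hk'a : k' a = l := by simp only [hk']; rw [if_pos hka]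
          have hfirst : c b ≠ (σ (k a)).castSucc := by rw [hka]; exact hcne b
          rw [if_neg hfirst, zero_add]
          have hcond : (k a = L1 ∧ c b = (σ l).castSucc) ↔ b = p a := by
            constructor
            · intro hh
              apply hc
              rw [hp, hh.2, hk'a]
            · intro hh
              refine ⟨hka, ?_⟩
              rw [hh, hp, hk'a]
          have hda : d a = y₃ := by simp only [hd]; rw [if_pos hka]
          rw [if_congr hcond rfl rfl, hda]
        · have hk'a : k' a = k a := by simp only [hk']; rw [if_neg hka]
          have hneg : ¬ (k a = L1 ∧ c b = (σ l).castSucc) := fun hh => hka hh.1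
          rw [if_neg hneg, add_zero]
          have hcond : (c b = (σ (k a)).castSucc) ↔ b = p a := by
            rw [← hk'a, ← hp a, hc.eq_iff]
          have hda : d a = 1 := by simp only [hd]; rw [if_neg hka]
          rw [if_congr hcond rfl rfl, hda])
    rw [habs]
    -- the product of |d| is |y₃|
    have hL1cs : (L1.castSucc : Fin (n+1)) ≠ l.castSucc := by
      rw [Ne, Fin.castSucc_inj]; exact hL1ne
    obtain ⟨a₀, ha₀⟩ := hrsurj L1.castSucc hL1cs (Fin.castSucc_lt_last L1).ne
    have hka₀ : k a₀ = L1 := by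
      have := (hkr a₀).symm.trans ha₀
      exact Fin.castSucc_inj.mp this
    have hda : ∀ a, |d a| = if a = a₀ then |y₃| else 1 := by
      intro a
      rw [hd]
      by_cases h : a = a₀
      · simp [h, hka₀]
      · have : k a ≠ L1 := by
          intro hh
          exact h (hkinj (hh.trans hka₀.symm))
        simp [this, h]
    calc (∏ a, |d a|) = ∏ a, (if a = a₀ then |y₃| else 1) := by
          exact Finset.prod_congr rfl (fun a _ => hda a)
      _ = |y₃| := by rw [Finset.prod_ite_eq']; simp
  · -- Other cases: determinant vanishes
    intro h1 h2
    by_cases hlast : Fin.last n = j₁ ∨ Fin.last n = j₂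
    · -- last is among the removed columns; find the other removed column
      have hpair : ∃ j' : Fin (n+1), j' ≠ Fin.last n ∧
          ({j₁, j₂} : Finset (Fin (n+1))) = {j', Fin.last n} := by
        rcases hlast with h | h
        · exact ⟨j₂, fun hh => hj (h.symm.trans hh.symm), by
            rw [← h, Finset.pair_comm]⟩
        · exact ⟨j₁, fun hh => hj (hh.trans h), by rw [← h]⟩
      obtain ⟨j', hj'last, hj'set⟩ := hpair
      have hj'mem : j' ∈ ({j₁, j₂} : Finset (Fin (n+1))) := by
        rw [hj'set]; simp
      have hj'ne1 : j' ≠ (σ l).castSucc := by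
        intro h
        exact h1 (by rw [hj'set, h])
      have hj'ne2 : j' ≠ (σ ⟨l.val + 1, hl⟩).castSucc := by
        intro h
        exact h2 (by rw [hj'set, h])
      obtain ⟨m, hm⟩ := Fin.exists_castSucc_eq.mpr hj'last
      -- pick the row k₀ = σ⁻¹ m
      set k₀ : Fin n := σ.symm m with hk₀
      have hk₀l : k₀ ≠ l := by
        intro h
        apply hj'ne1
        rw [← hm]
        have hms : m = σ l := by rw [← h, hk₀]; simp
        rw [hms]
      have hk₀l1 : k₀ ≠ ⟨l.val + 1, hl⟩ := by
        intro h
        apply hj'ne2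
        rw [← hm]
        have hms : m = σ ⟨l.val + 1, hl⟩ := by rw [← h, hk₀]; simp
        rw [hms]
      have hk₀cs : (k₀.castSucc : Fin (n+1)) ≠ l.castSucc := by
        rw [Ne, Fin.castSucc_inj]; exact hk₀l
      obtain ⟨a₀, ha₀⟩ := hrsurj k₀.castSucc hk₀cs (Fin.castSucc_lt_last k₀).ne
      have hka₀ : k a₀ = k₀ := Fin.castSucc_inj.mp ((hkr a₀).symm.trans ha₀)
      apply Matrix.det_eq_zero_of_row_eq_zero a₀
      intro b
      rw [hentry]
      have hb1 : c b ≠ (σ (k a₀)).castSucc := by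
        rw [hka₀, hk₀]
        simp only [Equiv.apply_symm_apply]
        rw [hm]
        intro hh
        rcases Finset.mem_insert.mp hj'mem with h | h
        · exact (hcavoid b).1 (hh.trans h)
        · exact (hcavoid b).2 (hh.trans (Finset.mem_singleton.mp h))
      have hb2 : k a₀ ≠ ⟨l.val + 1, hl⟩ := by rw [hka₀]; exact hk₀l1
      rw [if_neg hb1, if_neg (fun hh => hb2 hh.1)]
      ring
    · -- last is not removed, so the column `last` survives and is zero
      push_neg at hlast
      obtain ⟨b₀, hb₀⟩ := hcsurj (Fin.last n) hlast.1 hlast.2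
      apply Matrix.det_eq_zero_of_column_eq_zero b₀
      intro a
      rw [hentry, hb₀]
      rw [if_neg (Fin.castSucc_lt_last _).ne',
        if_neg (fun hh => (Fin.castSucc_lt_last _).ne' hh.2)]
      ring
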